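/- arXiv:2404.04512 — 3 statements merged into one kernel-verified Lean document; each statement's English description precedes it below -/
import Mathlib

section
/- For every h ≥ 1 there exists a symmetric chain decomposition 𝒞 of L′(3,h) (all chains saturated, with minimal and maximal ranks summing to 3h) such that: (a) the minimal elements of the chains of 𝒞 are exactly the partitions 1^{m1} with 0 ≤ m1 ≤ h and m1 ≠ 1; and (b) the chain whose minimal element is 1^{m1} has maximal element 3^{h − m1} 2^{m1} if m1 is even, and 3^{h − m1 + 1} 2^{m1 − 2} 1 if m1 is odd. -/
/-- `b` covers `a` in Young's lattice: `a ⊆ b` (componentwise, viewing partitions as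
lists of parts padded by zeros) and `b` has exactly one more box than `a`. -/
def CoversBox (a b : List ℕ) : Prop :=
  (∀ i, a.getD i 0 ≤ b.getD i 0) ∧ b.sum = a.sum + 1

/-- The partitions lying in a `w × h` box: largest part at most `w`, at most `h`
parts. -/
def boxSet (w h : ℕ) : Set (List ℕ) :=
  {l | l.Pairwise (· ≥ ·) ∧ (∀ x ∈ l, 0 < x ∧ x ≤ w) ∧ l.length ≤ h}

/-- `C` is a symmetric chain decomposition of the subset `S` of the partitions in a
`w × h` box: the members of `C` are nonempty saturated chains (recorded as lists,
increasing, consecutive elements differing by adding a single box) of elements of `S`,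
the ranks of the minimal and maximal element of each chain sum to `w*h`, and every
element of `S` lies in exactly one chain of `C`. -/
structure IsSCDOn (w h : ℕ) (S : Set (List ℕ)) (C : Set (List (List ℕ))) : Prop where
  nonempty : ∀ c ∈ C, c ≠ []
  subset : ∀ c ∈ C, ∀ l ∈ c, l ∈ S
  saturated : ∀ c ∈ C, c.Chain' CoversBox
  symm : ∀ c ∈ C, c.headI.sum + (c.getLastD []).sum = w * h
  partitioned : ∀ l ∈ S, ∃! c, c ∈ C ∧ l ∈ c

/-- A symmetric chain decomposition of `L(w,h)`, the poset of all partitions in a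
`w × h` box. -/
def IsSCD (w h : ℕ) (C : Set (List (List ℕ))) : Prop :=
  IsSCDOn w h (boxSet w h) C

/-- The subposet L′(3,h) of L(3,h): the partitions in a 3 × h box that do not contain
(3,1,1,1) as a subpartition, i.e. those with no part equal to 3 or at most two parts
equal to 1. -/
def Lprime3 (h : ℕ) : Set (List ℕ) :=
  {l | l ∈ boxSet 3 h ∧ (l.count 3 = 0 ∨ l.count 1 ≤ 2)}

/-! ### Auxiliary development for the proof -/

open List

def P3 (a b c : ℕ) : List ℕ := List.replicate a 3 ++ List.replicate b 2 ++ List.replicate c 1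

lemma P3_count3 (a b c : ℕ) : (P3 a b c).count 3 = a := by
  simp [P3, List.count_append, List.count_replicate]
lemma P3_count2 (a b c : ℕ) : (P3 a b c).count 2 = b := by
  simp [P3, List.count_append, List.count_replicate]
lemma P3_count1 (a b c : ℕ) : (P3 a b c).count 1 = c := by
  simp [P3, List.count_append, List.count_replicate]

lemma P3_inj {a b c a' b' c' : ℕ} (h : P3 a b c = P3 a' b' c') : a = a' ∧ b = b' ∧ c = c' := by
  refine ⟨?_, ?_, ?_⟩
  · rw [← P3_count3 a b c, h, P3_count3]
  · rw [← P3_count2 a b c, h, P3_count2]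
  · rw [← P3_count1 a b c, h, P3_count1]

lemma P3_sum (a b c : ℕ) : (P3 a b c).sum = 3*a + 2*b + c := by
  simp [P3, List.sum_replicate]; ring

lemma P3_length (a b c : ℕ) : (P3 a b c).length = a + b + c := by simp [P3]; omega

lemma P3_getD (a b c i : ℕ) :
    (P3 a b c).getD i 0 = if i < a then 3 else if i < a + b then 2 else if i < a + b + c then 1 else 0 := by
  unfold P3
  rcases Nat.lt_or_ge i a with h1 | h1
  · rw [List.getD_eq_getElem?_getD, List.getElem?_append_left, List.getElem?_append_left,
      List.getElem?_replicate, if_pos h1]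
    · simp [h1]
    · simpa using h1
    · simp; omega
  · rcases Nat.lt_or_ge i (a+b) with h2 | h2
    · rw [List.getD_eq_getElem?_getD, List.getElem?_append_left (by simp; omega),
        List.getElem?_append_right (by simpa using h1), List.getElem?_replicate,
        List.length_replicate, if_pos (by omega)]
      split_ifs <;> simp <;> omega
    · rw [List.getD_eq_getElem?_getD, List.getElem?_append_right (by simp; omega),
        List.getElem?_replicate]
      simp only [List.length_append, List.length_replicate]
      split_ifs <;> simp <;> omega

lemma P3_sorted (a b c : ℕ) : (P3 a b c).Pairwise (· ≥ ·) := by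
  unfold P3
  rw [List.pairwise_append]
  refine ⟨?_, ?_, ?_⟩
  · rw [List.pairwise_append]
    refine ⟨List.pairwise_replicate.2 (Or.inr le_rfl), List.pairwise_replicate.2 (Or.inr le_rfl), ?_⟩
    intro x hx y hy
    rw [List.eq_of_mem_replicate hx, List.eq_of_mem_replicate hy]; omega
  · exact List.pairwise_replicate.2 (Or.inr le_rfl)
  · intro x hx y hy
    rw [List.eq_of_mem_replicate hy]
    rcases List.mem_append.1 hx with h | h <;> rw [List.eq_of_mem_replicate h] <;> omega

lemma boxSet_eq_P3 {h : ℕ} {l : List ℕ} (hl : l ∈ boxSet 3 h) :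
    l = P3 (l.count 3) (l.count 2) (l.count 1) ∧ l.count 3 + l.count 2 + l.count 1 ≤ h := by
  obtain ⟨hs, hx, hlen⟩ := hl
  have hperm : l ~ P3 (l.count 3) (l.count 2) (l.count 1) := by
    rw [List.perm_iff_count]
    intro x
    by_cases h1 : x = 1
    · subst h1; rw [P3_count1]
    by_cases h2 : x = 2
    · subst h2; rw [P3_count2]
    by_cases h3 : x = 3
    · subst h3; rw [P3_count3]
    have hnl : x ∉ l := by
      intro hm; obtain ⟨hp, hle⟩ := hx x hm; omega
    rw [List.count_eq_zero.2 hnl]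
    simp [P3, List.count_append, List.count_replicate]
    split_ifs <;> omega
  constructor
  · exact hperm.eq_of_pairwise (fun a b _ _ h1 h2 => le_antisymm h2 h1) hs (P3_sorted _ _ _)
  · have := hperm.length_eq
    rw [P3_length] at this
    omega

lemma P3_mem_Lprime3 {h a b c : ℕ} (hle : a + b + c ≤ h) (hc : a = 0 ∨ c ≤ 2) :
    P3 a b c ∈ Lprime3 h := by
  refine ⟨⟨P3_sorted a b c, ?_, by rw [P3_length]; exact hle⟩, ?_⟩
  · intro x hx
    simp only [P3, List.mem_append, List.mem_replicate] at hx
    rcases hx with (⟨_, rfl⟩ | ⟨_, rfl⟩) | ⟨_, rfl⟩ <;> omega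
  · rw [P3_count3, P3_count1]; exact hc

lemma coversBox_P3 {a b c a' b' c' : ℕ} (h1 : a ≤ a') (h2 : a+b ≤ a'+b')
    (h3 : a+b+c ≤ a'+b'+c') (h4 : 3*a' + 2*b' + c' = 3*a + 2*b + c + 1) :
    CoversBox (P3 a b c) (P3 a' b' c') := by
  constructor
  · intro i; rw [P3_getD, P3_getD]; split_ifs <;> omega
  · rw [P3_sum, P3_sum, h4]

lemma headI_of_head? {α} [Inhabited α] {l : List α} {x : α} (h : l.head? = some x) :
    l.headI = x := by cases l <;> simp_all

section helpers
variable {α : Type*} {R : α → α → Prop}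

lemma chain'_map_range (f : ℕ → α) (n : ℕ) (hf : ∀ i, i+1 < n → R (f i) (f (i+1))) :
    IsChain R ((List.range n).map f) := by
  rw [List.isChain_map]
  cases n with
  | zero => simp
  | succ m => exact (List.isChain_range_succ (fun a b => R (f a) (f b)) m).2 fun i hi => hf i (by omega)

lemma getLast?_map_range (f : ℕ → α) (n : ℕ) (hn : 1 ≤ n) :
    ((List.range n).map f).getLast? = some (f (n-1)) := by
  obtain ⟨m, rfl⟩ : ∃ m, n = m+1 := ⟨n-1, by omega⟩
  rw [List.range_succ, List.map_append]
  simp [List.getLast?_concat]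

lemma head?_map_range (f : ℕ → α) (n : ℕ) (hn : 1 ≤ n) :
    ((List.range n).map f).head? = some (f 0) := by
  obtain ⟨m, rfl⟩ : ∃ m, n = m+1 := ⟨n-1, by omega⟩
  rw [List.range_succ_eq_map]
  simp

lemma getLast?_flatMap_range (g : ℕ → List α) (n : ℕ) (hn : 1 ≤ n) (hne : g (n-1) ≠ []) :
    ((List.range n).flatMap g).getLast? = (g (n-1)).getLast? := by
  obtain ⟨m, rfl⟩ : ∃ m, n = m+1 := ⟨n-1, by omega⟩
  rw [List.range_succ, List.flatMap_append, List.flatMap_singleton, List.getLast?_append]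
  simp only [Nat.add_sub_cancel] at hne ⊢
  exact Option.or_of_isSome (List.getLast?_isSome.2 hne)

lemma head?_flatMap_range (g : ℕ → List α) (n : ℕ) (hn : 1 ≤ n) (hne : g 0 ≠ []) :
    ((List.range n).flatMap g).head? = (g 0).head? := by
  obtain ⟨m, rfl⟩ : ∃ m, n = m+1 := ⟨n-1, by omega⟩
  rw [List.range_succ_eq_map, List.flatMap_cons, List.head?_append]
  refine Option.or_of_isSome ?_
  simpa [List.isSome_head?] using hne

lemma chain'_flatMap_range (g : ℕ → List α) (n : ℕ)
    (hne : ∀ a, g a ≠ [])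
    (hc : ∀ a, IsChain R (g a))
    (hl : ∀ a, ∀ x ∈ (g a).getLast?, ∀ y ∈ (g (a+1)).head?, R x y) :
    IsChain R ((List.range n).flatMap g) := by
  induction n with
  | zero => simp
  | succ m ih =>
    rw [List.range_succ, List.flatMap_append, List.flatMap_singleton, List.isChain_append]
    refine ⟨ih, hc m, ?_⟩
    intro x hx y hy
    cases m with
    | zero => simp at hx
    | succ p =>
      rw [getLast?_flatMap_range g (p+1) (by omega) (by simpa using hne p)] at hx
      simp only [Nat.add_sub_cancel] at hx
      exact hl p x hx y hy
end helpers

-- chains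
def phaseE (k : ℕ) : List (List ℕ) := (List.range (2*k+1)).map (fun j => P3 0 j (2*k - j))
def blockE (k a : ℕ) : List (List ℕ) := [P3 a (2*k) 1, P3 a (2*k+1) 0, P3 (a+1) (2*k) 0]
def evenChain (h k : ℕ) : List (List ℕ) := phaseE k ++ (List.range (h - 2*k)).flatMap (blockE k)
def phaseO (k : ℕ) : List (List ℕ) := (List.range (2*k)).map (fun j => P3 0 j (2*k+1-j))
def blockO (k a : ℕ) : List (List ℕ) := [P3 (a+1) (2*k-2) 2, P3 (a+1) (2*k-1) 1, P3 (a+1) (2*k-1) 2]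
def oddChain (h k : ℕ) : List (List ℕ) :=
  phaseO k ++ ((List.range (h - (2*k+1))).flatMap (blockO k) ++
    [P3 (h-2*k) (2*k-2) 2, P3 (h-2*k) (2*k-1) 1])

def QE (h k a b c : ℕ) : Prop :=
  (a = 0 ∧ b + c = 2*k ∧ b ≤ 2*k) ∨ (c = 0 ∧ b = 2*k ∧ a + 2*k ≤ h) ∨
  (c = 1 ∧ b = 2*k ∧ a + 2*k + 1 ≤ h) ∨ (c = 0 ∧ b = 2*k+1 ∧ a + 2*k + 1 ≤ h)
def QO (h k a b c : ℕ) : Prop :=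
  (a = 0 ∧ b + c = 2*k+1 ∧ 2 ≤ c) ∨ (1 ≤ a ∧ c = 2 ∧ b + 2 = 2*k ∧ a + 2*k ≤ h) ∨
  (1 ≤ a ∧ c = 1 ∧ b + 1 = 2*k ∧ a + 2*k ≤ h) ∨ (1 ≤ a ∧ c = 2 ∧ b + 1 = 2*k ∧ a + 2*k + 1 ≤ h)

lemma mem_evenChain_iff {h k : ℕ} {x : List ℕ} :
    x ∈ evenChain h k ↔ ∃ a b c, x = P3 a b c ∧ QE h k a b c := by
  rw [evenChain, phaseE, List.mem_append, List.mem_map, List.mem_flatMap]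
  constructor
  · rintro (⟨j, hj, rfl⟩ | ⟨a, ha, hx⟩)
    · rw [List.mem_range] at hj
      exact ⟨0, j, 2*k - j, rfl, Or.inl ⟨rfl, by omega, by omega⟩⟩
    · rw [List.mem_range] at ha
      simp only [blockE, List.mem_cons, List.not_mem_nil, or_false] at hx
      rcases hx with h1 | h1 | h1
      · exact ⟨a, 2*k, 1, h1.symm ▸ rfl, Or.inr (Or.inr (Or.inl ⟨rfl, rfl, by omega⟩))⟩
      · exact ⟨a, 2*k+1, 0, h1.symm ▸ rfl, Or.inr (Or.inr (Or.inr ⟨rfl, rfl, by omega⟩))⟩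
      · exact ⟨a+1, 2*k, 0, h1.symm ▸ rfl, Or.inr (Or.inl ⟨rfl, rfl, by omega⟩)⟩
  · rintro ⟨a, b, c, rfl, hq⟩
    rcases hq with ⟨rfl, hbc, hb⟩ | ⟨rfl, rfl, hb⟩ | ⟨rfl, rfl, hb⟩ | ⟨rfl, rfl, hb⟩
    · refine Or.inl ⟨b, List.mem_range.2 (by omega), ?_⟩
      obtain rfl : c = 2*k - b := by omega
      rfl
    · rcases Nat.eq_zero_or_pos a with rfl | ha
      · refine Or.inl ⟨2*k, List.mem_range.2 (by omega), ?_⟩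
        obtain h0 : 2*k - 2*k = 0 := by omega
        rw [h0]
      · refine Or.inr ⟨a-1, List.mem_range.2 (by omega), ?_⟩
        have : a - 1 + 1 = a := by omega
        rw [blockE, this]; simp
    · exact Or.inr ⟨a, List.mem_range.2 (by omega), by simp [blockE]⟩
    · exact Or.inr ⟨a, List.mem_range.2 (by omega), by simp [blockE]⟩

lemma mem_oddChain_iff {h k : ℕ} (hk : 1 ≤ k) (hkh : 2*k+1 ≤ h) {x : List ℕ} :
    x ∈ oddChain h k ↔ ∃ a b c, x = P3 a b c ∧ QO h k a b c := by
  rw [oddChain, phaseO, List.mem_append, List.mem_append, List.mem_map, List.mem_flatMap]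
  constructor
  · rintro (⟨j, hj, rfl⟩ | ⟨a, ha, hx⟩ | hx)
    · rw [List.mem_range] at hj
      exact ⟨0, j, 2*k+1-j, rfl, Or.inl ⟨rfl, by omega, by omega⟩⟩
    · rw [List.mem_range] at ha
      simp only [blockO, List.mem_cons, List.not_mem_nil, or_false] at hx
      rcases hx with h1 | h1 | h1
      · exact ⟨a+1, 2*k-2, 2, h1.symm ▸ rfl, Or.inr (Or.inl ⟨by omega, rfl, by omega, by omega⟩)⟩
      · exact ⟨a+1, 2*k-1, 1, h1.symm ▸ rfl, Or.inr (Or.inr (Or.inl ⟨by omega, rfl, by omega, by omega⟩))⟩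
      · exact ⟨a+1, 2*k-1, 2, h1.symm ▸ rfl, Or.inr (Or.inr (Or.inr ⟨by omega, rfl, by omega, by omega⟩))⟩
    · rcases List.mem_pair.1 hx with h1 | h1
      · exact ⟨h-2*k, 2*k-2, 2, h1 ▸ rfl, Or.inr (Or.inl ⟨by omega, rfl, by omega, by omega⟩)⟩
      · exact ⟨h-2*k, 2*k-1, 1, h1 ▸ rfl, Or.inr (Or.inr (Or.inl ⟨by omega, rfl, by omega, by omega⟩))⟩
  · rintro ⟨a, b, c, rfl, hq⟩
    rcases hq with ⟨rfl, hbc, hb⟩ | ⟨ha, rfl, hb, hh⟩ | ⟨ha, rfl, hb, hh⟩ | ⟨ha, rfl, hb, hh⟩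
    · refine Or.inl ⟨b, List.mem_range.2 (by omega), ?_⟩
      obtain rfl : c = 2*k+1 - b := by omega
      rfl
    · rcases Nat.lt_or_ge a (h - 2*k) with hlt | hge
      · refine Or.inr (Or.inl ⟨a-1, List.mem_range.2 (by omega), ?_⟩)
        have h1 : a - 1 + 1 = a := by omega
        have h2 : b = 2*k-2 := by omega
        rw [blockO, h1, h2]; simp
      · refine Or.inr (Or.inr ?_)
        have h1 : a = h - 2*k := by omega
        have h2 : b = 2*k-2 := by omega
        rw [h1, h2]; exact List.mem_pair.2 (Or.inl rfl)
    · rcases Nat.lt_or_ge a (h - 2*k) with hlt | hge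
      · refine Or.inr (Or.inl ⟨a-1, List.mem_range.2 (by omega), ?_⟩)
        have h1 : a - 1 + 1 = a := by omega
        have h2 : b = 2*k-1 := by omega
        rw [blockO, h1, h2]; simp
      · refine Or.inr (Or.inr ?_)
        have h1 : a = h - 2*k := by omega
        have h2 : b = 2*k-1 := by omega
        rw [h1, h2]; exact List.mem_pair.2 (Or.inr rfl)
    · refine Or.inr (Or.inl ⟨a-1, List.mem_range.2 (by omega), ?_⟩)
      have h1 : a - 1 + 1 = a := by omega
      have h2 : b = 2*k-1 := by omega
      rw [blockO, h1, h2]; simp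

lemma blockE_chain' (k a : ℕ) : IsChain CoversBox (blockE k a) := by
  rw [blockE]
  exact List.isChain_cons_cons.2 ⟨coversBox_P3 (by omega) (by omega) (by omega) (by omega),
    List.isChain_cons_cons.2 ⟨coversBox_P3 (by omega) (by omega) (by omega) (by omega),
      List.isChain_singleton _⟩⟩

lemma evenChain_chain' {h k : ℕ} (hk : 2*k ≤ h) : IsChain CoversBox (evenChain h k) := by
  rw [evenChain, List.isChain_append]
  refine ⟨?_, ?_, ?_⟩
  · exact chain'_map_range _ _ fun i hi => coversBox_P3 (by omega) (by omega) (by omega) (by omega)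
  · refine chain'_flatMap_range _ _ (fun a => by simp [blockE]) (blockE_chain' k) ?_
    intro a x hx y hy
    simp only [blockE, List.getLast?_cons_cons, List.getLast?_singleton, Option.mem_def,
      Option.some.injEq, List.head?_cons] at hx hy
    subst hx; subst hy
    exact coversBox_P3 (by omega) (by omega) (by omega) (by omega)
  · intro x hx y hy
    rw [phaseE, getLast?_map_range _ _ (by omega)] at hx
    simp only [Nat.add_sub_cancel, Option.mem_def, Option.some.injEq] at hx
    rcases Nat.eq_zero_or_pos (h - 2*k) with h0 | h0
    · rw [h0] at hy; simp at hy
    · rw [head?_flatMap_range _ _ h0 (by simp [blockE])] at hy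
      simp only [blockE, List.head?_cons, Option.mem_def, Option.some.injEq] at hy
      subst hx; subst hy
      exact coversBox_P3 (by omega) (by omega) (by omega) (by omega)

lemma oddChain_chain' {h k : ℕ} (hk : 1 ≤ k) (hkh : 2*k+1 ≤ h) :
    IsChain CoversBox (oddChain h k) := by
  rw [oddChain, List.isChain_append]
  refine ⟨?_, ?_, ?_⟩
  · exact chain'_map_range _ _ fun i hi => coversBox_P3 (by omega) (by omega) (by omega) (by omega)
  · rw [List.isChain_append]
    refine ⟨?_, ?_, ?_⟩
    · refine chain'_flatMap_range _ _ (fun a => by simp [blockO]) (fun a => ?_) ?_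
      · rw [blockO]
        exact List.isChain_cons_cons.2 ⟨coversBox_P3 (by omega) (by omega) (by omega) (by omega),
          List.isChain_cons_cons.2 ⟨coversBox_P3 (by omega) (by omega) (by omega) (by omega),
            List.isChain_singleton _⟩⟩
      · intro a x hx y hy
        simp only [blockO, List.getLast?_cons_cons, List.getLast?_singleton, Option.mem_def,
          Option.some.injEq, List.head?_cons] at hx hy
        subst hx; subst hy
        exact coversBox_P3 (by omega) (by omega) (by omega) (by omega)
    · exact List.isChain_cons_cons.2 ⟨coversBox_P3 (by omega) (by omega) (by omega) (by omega),
        List.isChain_singleton _⟩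
    · intro x hx y hy
      simp only [List.head?_cons, Option.mem_def, Option.some.injEq] at hy
      rcases Nat.eq_zero_or_pos (h - (2*k+1)) with h0 | h0
      · rw [h0] at hx; simp at hx
      · rw [getLast?_flatMap_range _ _ h0 (by simp [blockO])] at hx
        simp only [blockO, List.getLast?_cons_cons, List.getLast?_singleton, Option.mem_def,
          Option.some.injEq] at hx
        subst hx; subst hy
        exact coversBox_P3 (by omega) (by omega) (by omega) (by omega)
  · intro x hx y hy
    rw [phaseO, getLast?_map_range _ _ (by omega)] at hx
    simp only [Option.mem_def, Option.some.injEq] at hx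
    rw [List.head?_append] at hy
    rcases Nat.eq_zero_or_pos (h - (2*k+1)) with h0 | h0
    · rw [h0] at hy
      simp only [List.range_zero, List.flatMap_nil, List.head?_nil, Option.none_or,
        List.head?_cons, Option.mem_def, Option.some.injEq] at hy
      subst hx; subst hy
      exact coversBox_P3 (by omega) (by omega) (by omega) (by omega)
    · rw [head?_flatMap_range _ _ h0 (by simp [blockO])] at hy
      simp only [blockO, List.head?_cons, Option.or_some, Option.mem_def,
        Option.some.injEq] at hy
      subst hx; subst hy
      exact coversBox_P3 (by omega) (by omega) (by omega) (by omega)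

lemma evenChain_head? {h k : ℕ} : (evenChain h k).head? = some (P3 0 0 (2*k)) := by
  rw [evenChain, List.head?_append, phaseE, head?_map_range _ _ (by omega)]
  simp

lemma oddChain_head? {h k : ℕ} (hk : 1 ≤ k) : (oddChain h k).head? = some (P3 0 0 (2*k+1)) := by
  rw [oddChain, List.head?_append, phaseO, head?_map_range _ _ (by omega)]
  simp

lemma evenChain_getLast? {h k : ℕ} (hk : 2*k ≤ h) :
    (evenChain h k).getLast? = some (P3 (h-2*k) (2*k) 0) := by
  rw [evenChain, List.getLast?_append]
  rcases Nat.eq_zero_or_pos (h - 2*k) with h0 | h0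
  · rw [h0]
    simp only [List.range_zero, List.flatMap_nil, List.getLast?_nil, Option.none_or]
    rw [phaseE, getLast?_map_range _ _ (by omega)]
    simp only [Nat.add_sub_cancel, Option.some.injEq, h0]
    rw [Nat.sub_self]
  · rw [getLast?_flatMap_range _ _ h0 (by simp [blockE])]
    simp only [blockE, List.getLast?_cons_cons, List.getLast?_singleton]
    rw [Option.or_of_isSome (by simp)]
    congr 2
    omega

lemma oddChain_getLast? {h k : ℕ} :
    (oddChain h k).getLast? = some (P3 (h-2*k) (2*k-1) 1) := by
  rw [oddChain, List.getLast?_append, List.getLast?_append]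
  simp

lemma QE_unique {h k k' a b c : ℕ} (h1 : QE h k a b c) (h2 : QE h k' a b c) : k = k' := by
  unfold QE at h1 h2; omega

lemma QO_unique {h k k' a b c : ℕ} (h1 : QO h k a b c) (h2 : QO h k' a b c) : k = k' := by
  unfold QO at h1 h2; omega

lemma QE_QO_false {h k k' a b c : ℕ} (h1 : QE h k a b c) (h2 : QO h k' a b c) : False := by
  unfold QE at h1; unfold QO at h2; omega

lemma exists_chain {h a b c : ℕ} (hle : a+b+c ≤ h) (hc : a = 0 ∨ c ≤ 2) :
    (∃ k, 2*k ≤ h ∧ QE h k a b c) ∨ (∃ k, 1 ≤ k ∧ 2*k+1 ≤ h ∧ QO h k a b c) := by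
  unfold QE QO
  by_cases ha : a = 0
  · subst ha
    rcases Nat.even_or_odd (b+c) with ⟨t, ht⟩ | ⟨t, ht⟩
    · exact Or.inl ⟨t, by omega, by omega⟩
    · by_cases hc2 : 2 ≤ c
      · exact Or.inr ⟨t, by omega, by omega, by omega⟩
      · exact Or.inl ⟨t, by omega, by omega⟩
  · have hc2 : c ≤ 2 := by tauto
    rcases Nat.even_or_odd b with ⟨t, ht⟩ | ⟨t, ht⟩
    · by_cases hcc : c = 2
      · exact Or.inr ⟨t+1, by omega, by omega, by omega⟩
      · exact Or.inl ⟨t, by omega, by omega⟩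
    · by_cases hcc : c = 0
      · exact Or.inl ⟨t, by omega, by omega⟩
      · exact Or.inr ⟨t+1, by omega, by omega, by omega⟩

lemma ne_nil_of_head? {α} {l : List α} {x : α} (h : l.head? = some x) : l ≠ [] := by
  rintro rfl; simp at h

lemma evenChain_headI {h k : ℕ} : (evenChain h k).headI = List.replicate (2*k) 1 := by
  rw [headI_of_head? evenChain_head?]; simp [P3]

lemma oddChain_headI {h k : ℕ} (hk : 1 ≤ k) :
    (oddChain h k).headI = List.replicate (2*k+1) 1 := by
  rw [headI_of_head? (oddChain_head? hk)]; simp [P3]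

lemma evenChain_getLastD {h k : ℕ} (hk : 2*k ≤ h) :
    (evenChain h k).getLastD [] = P3 (h-2*k) (2*k) 0 := by
  rw [List.getLastD_eq_getLast?, evenChain_getLast? hk, Option.getD_some]

lemma oddChain_getLastD {h k : ℕ} :
    (oddChain h k).getLastD [] = P3 (h-2*k) (2*k-1) 1 := by
  rw [List.getLastD_eq_getLast?, oddChain_getLast?, Option.getD_some]

/-- For every h ≥ 1 there is a symmetric chain decomposition 𝒞 of
L′(3,h) (all chains saturated, minimal and maximal ranks summing to 3h) such that: (a)
the minimal elements of its chains are exactly the partitions 1^{m₁} with 0 ≤ m₁ ≤ h and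
m₁ ≠ 1; (b) the chain with minimal element 1^{m₁} has maximal element 3^{h−m₁} 2^{m₁} if
m₁ is even, and 3^{h−m₁+1} 2^{m₁−2} 1 if m₁ is odd. -/
theorem scd_Lprime3 (h : ℕ) (hh : 1 ≤ h) :
    ∃ C : Set (List (List ℕ)),
      IsSCDOn 3 h (Lprime3 h) C ∧
      (∀ l : List ℕ,
        (∃ c ∈ C, c.headI = l) ↔
          ∃ m1 : ℕ, m1 ≤ h ∧ m1 ≠ 1 ∧ l = List.replicate m1 1) ∧
      (∀ c ∈ C, ∀ m1 : ℕ, c.headI = List.replicate m1 1 →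
        (Even m1 →
          c.getLastD [] = List.replicate (h - m1) 3 ++ List.replicate m1 2) ∧
        (¬ Even m1 →
          c.getLastD [] = List.replicate (h - m1 + 1) 3 ++
            List.replicate (m1 - 2) 2 ++ [1])) := by
  refine ⟨{c | ∃ k, 2*k ≤ h ∧ c = evenChain h k} ∪
      {c | ∃ k, 1 ≤ k ∧ 2*k+1 ≤ h ∧ c = oddChain h k}, ⟨?_, ?_, ?_, ?_, ?_⟩, ?_, ?_⟩
  · -- nonempty
    rintro c (⟨k, hk, rfl⟩ | ⟨k, hk1, hkh, rfl⟩)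
    · exact ne_nil_of_head? evenChain_head?
    · exact ne_nil_of_head? (oddChain_head? hk1)
  · -- subset
    rintro c (⟨k, hk, rfl⟩ | ⟨k, hk1, hkh, rfl⟩) l hl
    · obtain ⟨a, b, c', rfl, hq⟩ := mem_evenChain_iff.1 hl
      exact P3_mem_Lprime3 (by unfold QE at hq; omega) (by unfold QE at hq; omega)
    · obtain ⟨a, b, c', rfl, hq⟩ := (mem_oddChain_iff hk1 hkh).1 hl
      exact P3_mem_Lprime3 (by unfold QO at hq; omega) (by unfold QO at hq; omega)
  · -- saturated
    rintro c (⟨k, hk, rfl⟩ | ⟨k, hk1, hkh, rfl⟩)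
    · exact evenChain_chain' hk
    · exact oddChain_chain' hk1 hkh
  · -- symm
    rintro c (⟨k, hk, rfl⟩ | ⟨k, hk1, hkh, rfl⟩)
    · rw [headI_of_head? evenChain_head?, evenChain_getLastD hk, P3_sum, P3_sum]
      omega
    · rw [headI_of_head? (oddChain_head? hk1), oddChain_getLastD, P3_sum, P3_sum]
      omega
  · -- partitioned
    intro l hl
    obtain ⟨hbox, hcnt⟩ := hl
    obtain ⟨hrep, hle⟩ := boxSet_eq_P3 hbox
    rcases exists_chain hle hcnt with ⟨k, hk, hq⟩ | ⟨k, hk1, hkh, hq⟩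
    · refine ⟨evenChain h k, ⟨Or.inl ⟨k, hk, rfl⟩, mem_evenChain_iff.2 ⟨_, _, _, hrep, hq⟩⟩, ?_⟩
      rintro c' ⟨(⟨k', hk', rfl⟩ | ⟨k', hk1', hkh', rfl⟩), hmem⟩
      · obtain ⟨a', b', c'', heq, hq'⟩ := mem_evenChain_iff.1 hmem
        rw [hrep] at heq
        obtain ⟨h1, h2, h3⟩ := P3_inj heq
        rw [QE_unique hq' (h1 ▸ h2 ▸ h3 ▸ hq)]
      · obtain ⟨a', b', c'', heq, hq'⟩ := (mem_oddChain_iff hk1' hkh').1 hmem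
        rw [hrep] at heq
        obtain ⟨h1, h2, h3⟩ := P3_inj heq
        exact absurd (QE_QO_false (h1 ▸ h2 ▸ h3 ▸ hq) hq') (by simp)
    · refine ⟨oddChain h k, ⟨Or.inr ⟨k, hk1, hkh, rfl⟩,
        (mem_oddChain_iff hk1 hkh).2 ⟨_, _, _, hrep, hq⟩⟩, ?_⟩
      rintro c' ⟨(⟨k', hk', rfl⟩ | ⟨k', hk1', hkh', rfl⟩), hmem⟩
      · obtain ⟨a', b', c'', heq, hq'⟩ := mem_evenChain_iff.1 hmem
        rw [hrep] at heq
        obtain ⟨h1, h2, h3⟩ := P3_inj heq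
        exact absurd (QE_QO_false hq' (h1 ▸ h2 ▸ h3 ▸ hq)) (by simp)
      · obtain ⟨a', b', c'', heq, hq'⟩ := (mem_oddChain_iff hk1' hkh').1 hmem
        rw [hrep] at heq
        obtain ⟨h1, h2, h3⟩ := P3_inj heq
        rw [QO_unique hq' (h1 ▸ h2 ▸ h3 ▸ hq)]
  · -- (a)
    intro l
    constructor
    · rintro ⟨c, (⟨k, hk, rfl⟩ | ⟨k, hk1, hkh, rfl⟩), rfl⟩
      · exact ⟨2*k, hk, by omega, evenChain_headI⟩
      · exact ⟨2*k+1, by omega, by omega, oddChain_headI hk1⟩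
    · rintro ⟨m1, hm1, hne, rfl⟩
      rcases Nat.even_or_odd m1 with ⟨t, ht⟩ | ⟨t, ht⟩
      · refine ⟨evenChain h t, Or.inl ⟨t, by omega, rfl⟩, ?_⟩
        rw [evenChain_headI]; congr 1; omega
      · refine ⟨oddChain h t, Or.inr ⟨t, by omega, by omega, rfl⟩, ?_⟩
        rw [oddChain_headI (by omega)]; congr 1; omega
  · -- (b)
    rintro c (⟨k, hk, rfl⟩ | ⟨k, hk1, hkh, rfl⟩) m1 hhead
    · rw [evenChain_headI] at hhead
      obtain rfl : m1 = 2*k := by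
        have := congrArg List.length hhead; simpa using this.symm
      constructor
      · intro _
        rw [evenChain_getLastD hk]
        simp [P3]
      · intro hno
        exact absurd ⟨k, by omega⟩ hno
    · rw [oddChain_headI hk1] at hhead
      obtain rfl : m1 = 2*k+1 := by
        have := congrArg List.length hhead; simpa using this.symm
      constructor
      · rintro ⟨r, hr⟩; omega
      · intro _
        rw [oddChain_getLastD]
        have e1 : h - (2*k+1) + 1 = h - 2*k := by omega
        have e2 : 2*k+1-2 = 2*k-1 := by omega
        rw [e1, e2]
        simp [P3]
end

section
/- For every h ≥ 1, the two-variable plethysm has Schur expansion s_4[s_h](x,y) = Σ_{λ = (λ1, λ2) ⊢ 4h} a^λ s_λ(x,y), where for each two-row partition λ = (λ1, λ2) of 4h the coefficient a^λ equals the number of partitions μ of λ2 of the form μ = 4^{m4} 2^{m2} 1^{m1} (only parts equal to 4, 2 or 1) satisfying m1 + m2 + m4 ≤ h, m2 even, m1 ≥ 2·m4, and m1 ≠ 2·m4 + 1. -/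
open MvPolynomial in
/-- The two-variable Schur polynomial `s_{(a,b)}(x,y)` for a partition `(a,b)` with
`a ≥ b ≥ 0`:  `s_{(a,b)}(x,y) = (xy)^b (x^{a-b+1} - y^{a-b+1})/(x-y)
= Σ_{i=0}^{a-b} x^{a-i} y^{b+i}`, the weight generating function of semistandard Young
tableaux of shape `(a,b)` with entries in `{1,2}` (`x = X 0`, `y = X 1`). -/
noncomputable def schur2 (a b : ℕ) : MvPolynomial (Fin 2) ℤ :=
  ∑ i ∈ Finset.range (a - b + 1), X 0 ^ (a - i) * X 1 ^ (b + i)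

open MvPolynomial in
/-- The plethysm `s_w[s_h](x,y)`: the complete homogeneous symmetric polynomial of degree
`w` evaluated at the `h+1` monomials `x^h, x^{h-1}y, …, y^h` of `s_{(h)}(x,y)`,
i.e. the sum over all multisets of size `w` of these monomials (coded by weakly
increasing functions `f : Fin w → Fin (h+1)`) of their products. -/
noncomputable def pleth2 (w h : ℕ) : MvPolynomial (Fin 2) ℤ :=
  ∑ f ∈ Finset.univ.filter (fun f : Fin w → Fin (h + 1) =>
      ∀ i j : Fin w, i ≤ j → f i ≤ f j),
    ∏ j : Fin w, (X 0 ^ (h - (f j : ℕ)) * X 1 ^ ((f j : ℕ)))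

/-- The number of partitions of `b` all of whose parts are 4, 2 or 1, say with `m4`
fours, `m2` twos and `m1` ones, such that `m1 + m2 + m4 ≤ h`, `m2` is even,
`m1 ≥ 2 m4` and `m1 ≠ 2 m4 + 1`. -/
noncomputable def coeff4 (h b : ℕ) : ℕ :=
  Set.ncard {l : List ℕ | ∃ m4 m2 m1 : ℕ,
    l = List.replicate m4 4 ++ List.replicate m2 2 ++ List.replicate m1 1 ∧
    l.sum = b ∧ m1 + m2 + m4 ≤ h ∧ Even m2 ∧ 2 * m4 ≤ m1 ∧ m1 ≠ 2 * m4 + 1}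

namespace Pleth4
open Finset
def Qset (h s : ℕ) : Finset (ℕ × ℕ × ℕ × ℕ) :=
  ((range (s+1)) ×ˢ (range (s+1)) ×ˢ (range (s+1)) ×ˢ (range (s+1))).filter
    fun x => x.1 ≤ x.2.1 ∧ x.2.1 ≤ x.2.2.1 ∧ x.2.2.1 ≤ x.2.2.2 ∧ x.2.2.2 ≤ h ∧
      x.1 + x.2.1 + x.2.2.1 + x.2.2.2 = s

def Q3set (h m : ℕ) : Finset (ℕ × ℕ × ℕ) :=
  ((range (m+1)) ×ˢ (range (m+1)) ×ˢ (range (m+1))).filter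
    fun x => x.1 ≤ x.2.1 ∧ x.2.1 ≤ x.2.2 ∧ x.2.2 ≤ h ∧ x.1 + x.2.1 + x.2.2 = m

def Tset (h M : ℕ) : Finset (ℕ × ℕ × ℕ) :=
  ((range (M+1)) ×ˢ (range (M+1)) ×ˢ (range (M+1))).filter
    fun x => x.2.2 ≠ 1 ∧ 6*x.1 + 4*x.2.1 + x.2.2 ≤ M ∧ 3*x.1 + 2*x.2.1 + x.2.2 ≤ h

def Wset (h M : ℕ) : Finset (ℕ × ℕ × ℕ) :=
  ((range (M+1)) ×ˢ (range (M+1)) ×ˢ (range (M+1))).filter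
    fun x => x.2.2 ≠ 1 ∧ 6*x.1 + 4*x.2.1 + x.2.2 ≤ M ∧ 3*x.1 + 2*x.2.1 + x.2.2 = h

def P2set (m : ℕ) : Finset (ℕ × ℕ) :=
  ((range (m+1)) ×ˢ (range (m+1))).filter fun x => 3*x.1 + 2*x.2 ≤ m

def Pexc (m k : ℕ) : Finset (ℕ × ℕ) :=
  ((range (m+1)) ×ˢ (range (m+1))).filter fun x => 3*x.1 + 2*x.2 ≤ m ∧ 3*x.1 + 2*x.2 ≠ k

def Hset (k : ℕ) : Finset (ℕ × ℕ) :=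
  ((range (k+1)) ×ˢ (range (k+1))).filter fun x => 3*x.1 + 2*x.2 = k

def Eqset (h b : ℕ) : Finset (ℕ × ℕ × ℕ) :=
  ((range (b+1)) ×ˢ (range (b+1)) ×ˢ (range (b+1))).filter
    fun x => 4*x.1 + 4*x.2.1 + x.2.2 = b ∧ x.1 + 2*x.2.1 + x.2.2 ≤ h ∧
      2*x.1 ≤ x.2.2 ∧ x.2.2 ≠ 2*x.1 + 1

def Uset (h M : ℕ) : Finset (ℕ × ℕ × ℕ) :=
  ((range (M+1)) ×ˢ (range (M+1)) ×ˢ (range (M+1))).filter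
    fun x => 4*x.1 + 4*x.2.1 + x.2.2 ≤ M ∧ x.1 + 2*x.2.1 + x.2.2 ≤ h ∧
      2*x.1 ≤ x.2.2 ∧ x.2.2 ≠ 2*x.1 + 1

lemma mem_Qset {h s : ℕ} {x : ℕ × ℕ × ℕ × ℕ} :
    x ∈ Qset h s ↔ x.1 ≤ x.2.1 ∧ x.2.1 ≤ x.2.2.1 ∧ x.2.2.1 ≤ x.2.2.2 ∧ x.2.2.2 ≤ h ∧
      x.1 + x.2.1 + x.2.2.1 + x.2.2.2 = s := by
  simp only [Qset, mem_filter, mem_product, mem_range]; omega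

lemma mem_Q3set {h m : ℕ} {x : ℕ × ℕ × ℕ} :
    x ∈ Q3set h m ↔ x.1 ≤ x.2.1 ∧ x.2.1 ≤ x.2.2 ∧ x.2.2 ≤ h ∧ x.1 + x.2.1 + x.2.2 = m := by
  simp only [Q3set, mem_filter, mem_product, mem_range]; omega

lemma mem_Tset {h M : ℕ} {x : ℕ × ℕ × ℕ} :
    x ∈ Tset h M ↔ x.2.2 ≠ 1 ∧ 6*x.1 + 4*x.2.1 + x.2.2 ≤ M ∧ 3*x.1 + 2*x.2.1 + x.2.2 ≤ h := by
  simp only [Tset, mem_filter, mem_product, mem_range]; omega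

lemma mem_Wset {h M : ℕ} {x : ℕ × ℕ × ℕ} :
    x ∈ Wset h M ↔ x.2.2 ≠ 1 ∧ 6*x.1 + 4*x.2.1 + x.2.2 ≤ M ∧ 3*x.1 + 2*x.2.1 + x.2.2 = h := by
  simp only [Wset, mem_filter, mem_product, mem_range]; omega

lemma mem_P2set {m : ℕ} {x : ℕ × ℕ} : x ∈ P2set m ↔ 3*x.1 + 2*x.2 ≤ m := by
  simp only [P2set, mem_filter, mem_product, mem_range]; omega

lemma mem_Pexc {m k : ℕ} {x : ℕ × ℕ} :
    x ∈ Pexc m k ↔ 3*x.1 + 2*x.2 ≤ m ∧ 3*x.1 + 2*x.2 ≠ k := by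
  simp only [Pexc, mem_filter, mem_product, mem_range]; omega

lemma mem_Hset {k : ℕ} {x : ℕ × ℕ} : x ∈ Hset k ↔ 3*x.1 + 2*x.2 = k := by
  simp only [Hset, mem_filter, mem_product, mem_range]; omega

lemma mem_Eqset {h b : ℕ} {x : ℕ × ℕ × ℕ} :
    x ∈ Eqset h b ↔ 4*x.1 + 4*x.2.1 + x.2.2 = b ∧ x.1 + 2*x.2.1 + x.2.2 ≤ h ∧
      2*x.1 ≤ x.2.2 ∧ x.2.2 ≠ 2*x.1 + 1 := by
  simp only [Eqset, mem_filter, mem_product, mem_range]; omega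

lemma mem_Uset {h M : ℕ} {x : ℕ × ℕ × ℕ} :
    x ∈ Uset h M ↔ 4*x.1 + 4*x.2.1 + x.2.2 ≤ M ∧ x.1 + 2*x.2.1 + x.2.2 ≤ h ∧
      2*x.1 ≤ x.2.2 ∧ x.2.2 ≠ 2*x.1 + 1 := by
  simp only [Uset, mem_filter, mem_product, mem_range]; omega


-- L8: triangle count equals pair count
lemma card_Q3set (h m : ℕ) (hm : m ≤ h) : (Q3set h m).card = (P2set m).card := by
  apply card_nbij' (i := fun x => (x.1, x.2.1 - x.1))
    (j := fun y => (y.1, y.1 + y.2, m - (2*y.1 + y.2)))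
  · intro a ha; simp only [mem_coe, mem_Q3set] at ha; simp only [mem_coe, mem_P2set]; omega
  · intro a ha; simp only [mem_coe, mem_P2set] at ha; simp only [mem_coe, mem_Q3set]; omega
  · intro a ha; simp only [mem_coe, mem_Q3set] at ha; simp only [mem_coe, Prod.ext_iff, true_and, and_true]; omega
  · intro a ha; simp only [mem_coe, mem_P2set] at ha; simp only [mem_coe, Prod.ext_iff, true_and, and_true]; omega

-- L3: symmetry
lemma card_Qset_symm (h s : ℕ) (hs : s ≤ 4*h) :
    (Qset h s).card = (Qset h (4*h - s)).card := by
  apply card_nbij' (i := fun x => (h - x.2.2.2, h - x.2.2.1, h - x.2.1, h - x.1))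
    (j := fun x => (h - x.2.2.2, h - x.2.2.1, h - x.2.1, h - x.1))
  · intro a ha; simp only [mem_coe, mem_Qset] at ha; simp only [mem_coe, mem_Qset]; omega
  · intro a ha; simp only [mem_coe, mem_Qset] at ha; simp only [mem_coe, mem_Qset]; omega
  · intro a ha; simp only [mem_coe, mem_Qset] at ha; simp only [mem_coe, Prod.ext_iff, true_and, and_true]; omega
  · intro a ha; simp only [mem_coe, mem_Qset] at ha; simp only [mem_coe, Prod.ext_iff, true_and, and_true]; omega

-- L2: recurrence
lemma card_Qset_succ_lt (h s : ℕ) (hs : s < h + 1) :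
    (Qset (h+1) s).card = (Qset h s).card := by
  congr 1; ext x; simp only [mem_Qset, mem_Qset]; omega

lemma card_Qset_succ (h s : ℕ) (hs : h + 1 ≤ s) :
    (Qset (h+1) s).card = (Qset h s).card + (Q3set (h+1) (s - (h+1))).card := by
  have hsplit := filter_union_filter_not_eq (p := fun x : ℕ×ℕ×ℕ×ℕ => x.2.2.2 ≤ h) (Qset (h+1) s)
  rw [← hsplit, card_union_of_disjoint (disjoint_filter_filter_not _ _ _)]
  congr 1
  · congr 1; ext x; simp only [mem_filter, mem_Qset]; omega
  · apply card_nbij' (i := fun x => (x.1, x.2.1, x.2.2.1))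
      (j := fun y => (y.1, y.2.1, y.2.2, h+1))
    · intro a ha; simp only [mem_coe, mem_filter, mem_Qset] at ha; simp only [mem_coe, mem_Q3set]; omega
    · intro a ha; simp only [mem_coe, mem_Q3set] at ha; simp only [mem_coe, mem_filter, mem_Qset]; omega
    · intro a ha; simp only [mem_coe, mem_filter, mem_Qset] at ha; simp only [mem_coe, Prod.ext_iff, true_and, and_true]; omega
    · intro a ha; simp only [mem_coe, mem_Q3set] at ha; simp only [mem_coe, Prod.ext_iff, true_and, and_true]; try omega

-- L4: Tset recurrence
lemma card_Tset_succ (h M : ℕ) :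
    (Tset (h+1) M).card = (Tset h M).card + (Wset (h+1) M).card := by
  have hsplit := filter_union_filter_not_eq
    (p := fun x : ℕ×ℕ×ℕ => 3*x.1 + 2*x.2.1 + x.2.2 ≤ h) (Tset (h+1) M)
  rw [← hsplit, card_union_of_disjoint (disjoint_filter_filter_not _ _ _)]
  congr 1
  · congr 1; ext x; simp only [mem_filter, mem_Tset]; omega
  · congr 1; ext x; simp only [mem_filter, mem_Tset, mem_Wset]; omega

-- L5: stabilization
lemma Tset_stab (h s : ℕ) (hs : 2*h ≤ s) : Tset h s = Tset h (2*h) := by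
  ext x; simp only [mem_Tset, mem_Tset]; omega

-- L6
lemma card_Tset_top (h : ℕ) (hh : 1 ≤ h) :
    (Tset h (2*h)).card = (Tset h (2*h - 1)).card + (Hset h).card := by
  have hsplit := filter_union_filter_not_eq
    (p := fun x : ℕ×ℕ×ℕ => 6*x.1 + 4*x.2.1 + x.2.2 ≤ 2*h - 1) (Tset h (2*h))
  rw [← hsplit, card_union_of_disjoint (disjoint_filter_filter_not _ _ _)]
  congr 1
  · congr 1; ext x; simp only [mem_filter, mem_Tset]; omega
  · apply card_nbij' (i := fun x => (x.1, x.2.1)) (j := fun y => (y.1, y.2, 0))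
    · intro a ha; simp only [mem_coe, mem_filter, mem_Tset] at ha; simp only [mem_coe, mem_Hset]; omega
    · intro a ha; simp only [mem_coe, mem_Hset] at ha; simp only [mem_coe, mem_filter, mem_Tset]; omega
    · intro a ha; simp only [mem_coe, mem_filter, mem_Tset] at ha; simp only [mem_coe, Prod.ext_iff, true_and, and_true]; omega
    · intro a ha; simp only [mem_coe, mem_Hset] at ha; simp only [mem_coe, Prod.ext_iff, true_and, and_true]; try omega

-- L6'
lemma Tset_penult (h : ℕ) (hh : 1 ≤ h) : Tset h (2*h - 1) = Tset h (2*h - 2) := by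
  ext x; simp only [mem_Tset, mem_Tset]; omega

-- L7a
lemma Wset_empty (h M : ℕ) (hM : M ≤ h) : Wset (h+1) M = ∅ := by
  ext x; simp only [mem_Wset]; simp only [notMem_empty, iff_false]; push_neg
  intro _ hw; omega

-- L7b
lemma card_Wset (h M : ℕ) (h1 : h + 1 ≤ M) (h2 : M ≤ 2*h + 2) :
    (Wset (h+1) M).card = (Pexc (M - (h+1)) h).card := by
  apply card_nbij' (i := fun x => (x.1, x.2.1))
    (j := fun y => (y.1, y.2, (h+1) - (3*y.1 + 2*y.2)))
  · intro a ha; simp only [mem_coe, mem_Wset] at ha; simp only [mem_coe, mem_Pexc]; omega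
  · intro a ha; simp only [mem_coe, mem_Pexc] at ha; simp only [mem_coe, mem_Wset]; omega
  · intro a ha; simp only [mem_coe, mem_Wset] at ha; simp only [mem_coe, Prod.ext_iff, true_and, and_true]; omega
  · intro a ha; simp only [mem_coe, mem_Pexc] at ha; simp only [mem_coe, Prod.ext_iff, true_and, and_true]; try omega

-- L7c
lemma Pexc_eq_P2set (m k : ℕ) (hm : m < k) : Pexc m k = P2set m := by
  ext x; simp only [mem_Pexc, mem_P2set]; omega

-- L7d
lemma card_P2set_split (m k : ℕ) (hk : k ≤ m) :
    (P2set m).card = (Pexc m k).card + (Hset k).card := by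
  have hsplit := filter_union_filter_not_eq
    (p := fun x : ℕ×ℕ => 3*x.1 + 2*x.2 ≠ k) (P2set m)
  rw [← hsplit, card_union_of_disjoint (disjoint_filter_filter_not _ _ _)]
  congr 1
  · congr 1; ext x; simp only [mem_filter, mem_P2set, mem_Pexc]; try omega
  · congr 1; ext x; simp only [mem_filter, mem_P2set, mem_Hset]; omega


lemma main_count (h : ℕ) : ∀ s, s ≤ 4*h → (Qset h s).card = (Tset h (min s (4*h - s))).card := by
  induction h with
  | zero =>
    intro s hs
    interval_cases s
    decide
  | succ h ih =>
    have aux : ∀ s, s ≤ 2*h + 2 → (Qset (h+1) s).card = (Tset (h+1) s).card := by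
      intro s hs
      rcases Nat.eq_zero_or_pos h with rfl | hh1
      · interval_cases s <;> decide
      rcases lt_or_ge s (h+1) with hlt | hge
      · -- s < h+1
        rw [card_Qset_succ_lt h s hlt, card_Tset_succ h s, Wset_empty h s (by omega),
          card_empty, ih s (by omega)]
        have hmin : min s (4*h - s) = s := by omega
        rw [hmin]; omega
      rcases le_or_gt s (2*h) with hle | hgt
      · -- h+1 ≤ s ≤ 2h
        rw [card_Qset_succ h s hge, card_Tset_succ h s, ih s (by omega)]
        have hmin : min s (4*h - s) = s := by omega
        rw [hmin, card_Q3set (h+1) (s - (h+1)) (by omega),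
          card_Wset h s hge (by omega), Pexc_eq_P2set (s - (h+1)) h (by omega)]
      · -- s = 2h+1 or 2h+2
        rw [card_Qset_succ h s hge, card_Tset_succ h s]
        have e1 : (Qset h s).card = (Tset h (4*h - s)).card := by
          rw [card_Qset_symm h s (by omega), ih (4*h - s) (by omega)]
          have : min (4*h - s) (4*h - (4*h - s)) = 4*h - s := by omega
          rw [this]
        have e2 : (Tset h s).card = (Tset h (4*h - s)).card + (Hset h).card := by
          rw [Tset_stab h s (by omega), card_Tset_top h hh1]
          congr 2
          rcases (by omega : s = 2*h+1 ∨ s = 2*h+2) with rfl | rfl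
          · congr 1; omega
          · rw [Tset_penult h hh1]; congr 1; omega
        have e3 : (Wset (h+1) s).card = (Pexc (s - (h+1)) h).card :=
          card_Wset h s hge (by omega)
        have e4 : (Q3set (h+1) (s - (h+1))).card = (P2set (s - (h+1))).card :=
          card_Q3set (h+1) (s - (h+1)) (by omega)
        have e5 : (P2set (s - (h+1))).card = (Pexc (s - (h+1)) h).card + (Hset h).card :=
          card_P2set_split (s - (h+1)) h (by omega)
        omega
    intro s hs
    rcases le_or_gt s (2*h + 2) with hle | hgt
    · have hmin : min s (4*(h+1) - s) = s := by omega
      rw [hmin]; exact aux s hle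
    · have hmin : min s (4*(h+1) - s) = 4*(h+1) - s := by omega
      rw [card_Qset_symm (h+1) s (by omega), hmin]
      exact aux (4*(h+1) - s) (by omega)


lemma sum_repl (n a : ℕ) : (List.replicate n a).sum = n * a := by
  induction n with
  | zero => simp
  | succ k ihk => rw [List.replicate_succ, List.sum_cons, ihk]; ring

lemma card_Uset_eq_Tset (h M : ℕ) : (Uset h M).card = (Tset h M).card := by
  apply card_nbij' (i := fun x => (x.1, x.2.1, x.2.2 - 2*x.1))
    (j := fun y => (y.1, y.2.1, y.2.2 + 2*y.1))
  · intro a ha; simp only [mem_coe, mem_Uset] at ha; simp only [mem_coe, mem_Tset]; omega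
  · intro a ha; simp only [mem_coe, mem_Tset] at ha; simp only [mem_coe, mem_Uset]; omega
  · intro a ha; simp only [mem_coe, mem_Uset] at ha; simp only [mem_coe, Prod.ext_iff, true_and, and_true]; try omega
  · intro a ha; simp only [mem_coe, mem_Tset] at ha; simp only [mem_coe, Prod.ext_iff, true_and, and_true]; try omega

lemma card_Uset_fiber (h M : ℕ) :
    (Uset h M).card = ∑ b ∈ range (M+1), (Eqset h b).card := by
  rw [card_eq_sum_card_fiberwise (f := fun x => 4*x.1 + 4*x.2.1 + x.2.2) (t := range (M+1))
    (fun x hx => by simp only [mem_coe, mem_Uset] at hx; simp only [mem_coe, mem_range]; omega)]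
  refine sum_congr rfl fun b hb => ?_
  simp only [mem_range] at hb
  congr 1
  ext x
  simp only [mem_filter, mem_Uset, mem_Eqset]
  omega

lemma mem_Eqset' {h b m4 n m1 : ℕ} :
    (m4, n, m1) ∈ Eqset h b ↔ 4*m4 + 4*n + m1 = b ∧ m4 + 2*n + m1 ≤ h ∧
      2*m4 ≤ m1 ∧ m1 ≠ 2*m4 + 1 := by
  simp only [mem_Eqset]

lemma coeff4_eq_card (h b : ℕ) : coeff4 h b = (Eqset h b).card := by
  classical
  set g : ℕ × ℕ × ℕ → List ℕ :=
    fun x => List.replicate x.1 4 ++ List.replicate (2*x.2.1) 2 ++ List.replicate x.2.2 1 with hg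
  have hset : {l : List ℕ | ∃ m4 m2 m1 : ℕ,
      l = List.replicate m4 4 ++ List.replicate m2 2 ++ List.replicate m1 1 ∧
      l.sum = b ∧ m1 + m2 + m4 ≤ h ∧ Even m2 ∧ 2 * m4 ≤ m1 ∧ m1 ≠ 2 * m4 + 1}
      = ↑((Eqset h b).image g) := by
    ext l
    simp only [Set.mem_setOf_eq, coe_image, Set.mem_image, mem_coe]
    constructor
    · rintro ⟨m4, m2, m1, rfl, hsum, hle, heven, hge, hne⟩
      obtain ⟨n, rfl⟩ := heven
      rw [List.sum_append, List.sum_append, sum_repl, sum_repl, sum_repl] at hsum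
      refine ⟨(m4, n, m1), mem_Eqset'.mpr (by omega), ?_⟩
      simp only [hg]
      have h2n : 2*n = n + n := by omega
      rw [h2n]
    · rintro ⟨⟨m4, n, m1⟩, hx, rfl⟩
      rw [mem_Eqset'] at hx
      refine ⟨m4, 2*n, m1, by simp only [hg], ?_, by omega, ⟨n, by ring⟩, by omega, by omega⟩
      simp only [hg, List.sum_append, sum_repl]
      omega
  rw [coeff4, hset, Set.ncard_coe_finset, card_image_of_injOn]
  intro x _ y _ hxy
  have h4 := congrArg (fun l : List ℕ => l.count 4) hxy
  have h2 := congrArg (fun l : List ℕ => l.count 2) hxy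
  have h1 := congrArg (fun l : List ℕ => l.count 1) hxy
  simp only [hg, List.count_append, List.count_replicate] at h4 h2 h1
  norm_num at h4 h2 h1
  simp only [Prod.ext_iff]
  omega

lemma sum_coeff4 (h M : ℕ) :
    ∑ b ∈ range (M+1), coeff4 h b = (Tset h M).card := by
  rw [← card_Uset_eq_Tset, card_Uset_fiber]
  exact sum_congr rfl fun b _ => coeff4_eq_card h b


open MvPolynomial

lemma mono_of_chain {n : ℕ} (g : Fin 4 → Fin n) (h01 : g 0 ≤ g 1) (h12 : g 1 ≤ g 2)
    (h23 : g 2 ≤ g 3) : ∀ i j : Fin 4, i ≤ j → g i ≤ g j := by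
  intro i j hij
  fin_cases i <;> fin_cases j <;>
    first
      | exact absurd hij (by decide)
      | exact le_refl _
      | assumption
      | exact le_trans h01 h12
      | exact le_trans h12 h23
      | exact le_trans h01 (le_trans h12 h23)

lemma card_fiber (h s : ℕ) :
    ((Finset.univ.filter (fun f : Fin 4 → Fin (h+1) => ∀ i j : Fin 4, i ≤ j → f i ≤ f j)).filter
      (fun f => (∑ j : Fin 4, (f j : ℕ)) = s)).card = (Qset h s).card := by
  apply card_nbij' (i := fun f => ((f 0 : ℕ), (f 1 : ℕ), (f 2 : ℕ), (f 3 : ℕ)))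
    (j := fun x => fun k : Fin 4 =>
      (⟨min (![x.1, x.2.1, x.2.2.1, x.2.2.2] k) h,
        Nat.lt_succ_of_le (min_le_right _ _)⟩ : Fin (h+1)))
  · intro f hf
    simp only [mem_coe, mem_filter, mem_univ, true_and] at hf
    obtain ⟨hmono, hsum⟩ := hf
    rw [Fin.sum_univ_four] at hsum
    have h01 := hmono 0 1 (by decide)
    have h12 := hmono 1 2 (by decide)
    have h23 := hmono 2 3 (by decide)
    rw [Fin.le_def] at h01 h12 h23
    have hb := (f 3).isLt
    simp only [mem_coe, mem_Qset]
    omega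
  · intro x hx
    simp only [mem_coe, mem_Qset] at hx
    simp only [mem_coe, mem_filter, mem_univ, true_and]
    constructor
    · apply mono_of_chain <;>
        (simp only [Fin.mk_le_mk, Matrix.cons_val_zero, Matrix.cons_val_one, Matrix.head_cons,
          Matrix.cons_val_two, Matrix.tail_cons, Matrix.cons_val_three]; omega)
    · rw [Fin.sum_univ_four]
      simp only [Matrix.cons_val_zero, Matrix.cons_val_one, Matrix.head_cons,
        Matrix.cons_val_two, Matrix.tail_cons, Matrix.cons_val_three]
      omega
  · intro f hf
    simp only [mem_coe, mem_filter, mem_univ, true_and] at hf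
    obtain ⟨hmono, _⟩ := hf
    funext k
    apply Fin.ext
    have b0 := (f 0).isLt; have b1 := (f 1).isLt; have b2 := (f 2).isLt; have b3 := (f 3).isLt
    fin_cases k <;> simp <;> omega
  · intro x hx
    simp only [mem_coe, mem_Qset] at hx
    simp only [Prod.ext_iff, Matrix.cons_val_zero, Matrix.cons_val_one, Matrix.head_cons,
      Matrix.cons_val_two, Matrix.tail_cons, Matrix.cons_val_three, true_and, and_true]
    omega

lemma pleth2_expand (h : ℕ) :
    pleth2 4 h = ∑ s ∈ range (4*h+1),
      ((Qset h s).card : ℤ) • (X 0 ^ (4*h - s) * X 1 ^ s : MvPolynomial (Fin 2) ℤ) := by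
  rw [pleth2]
  have hterm : ∀ f ∈ Finset.univ.filter (fun f : Fin 4 → Fin (h+1) =>
      ∀ i j : Fin 4, i ≤ j → f i ≤ f j),
      (∏ j : Fin 4, (X 0 ^ (h - (f j : ℕ)) * X 1 ^ ((f j : ℕ)) : MvPolynomial (Fin 2) ℤ))
        = X 0 ^ (4*h - ∑ j : Fin 4, (f j : ℕ)) * X 1 ^ (∑ j : Fin 4, (f j : ℕ)) := by
    intro f _
    rw [Finset.prod_mul_distrib, Finset.prod_pow_eq_pow_sum, Finset.prod_pow_eq_pow_sum]
    congr 2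
    have b0 := (f 0).isLt; have b1 := (f 1).isLt; have b2 := (f 2).isLt; have b3 := (f 3).isLt
    rw [Fin.sum_univ_four, Fin.sum_univ_four]
    omega
  rw [Finset.sum_congr rfl hterm]
  have hmaps : ∀ f ∈ Finset.univ.filter (fun f : Fin 4 → Fin (h+1) =>
      ∀ i j : Fin 4, i ≤ j → f i ≤ f j), (∑ j : Fin 4, (f j : ℕ)) ∈ range (4*h+1) := by
    intro f _
    have b0 := (f 0).isLt; have b1 := (f 1).isLt; have b2 := (f 2).isLt; have b3 := (f 3).isLt
    rw [mem_range, Fin.sum_univ_four]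
    omega
  rw [← Finset.sum_fiberwise_of_maps_to hmaps]
  refine Finset.sum_congr rfl fun s hs => ?_
  have hconst : ∀ f ∈ (Finset.univ.filter (fun f : Fin 4 → Fin (h+1) =>
      ∀ i j : Fin 4, i ≤ j → f i ≤ f j)).filter (fun f => (∑ j : Fin 4, (f j : ℕ)) = s),
      (X 0 ^ (4*h - ∑ j : Fin 4, (f j : ℕ)) * X 1 ^ (∑ j : Fin 4, (f j : ℕ))
        : MvPolynomial (Fin 2) ℤ) = X 0 ^ (4*h - s) * X 1 ^ s := by
    intro f hf
    rw [(mem_filter.mp hf).2]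
  rw [Finset.sum_congr rfl hconst, Finset.sum_const, card_fiber h s,
    Nat.cast_smul_eq_nsmul ℤ]

lemma schur2_expand (h b : ℕ) (hb : b ≤ 2*h) :
    schur2 (4*h - b) b = ∑ j ∈ (range (4*h+1)).filter (fun j => b ≤ j ∧ j + b ≤ 4*h),
      (X 0 ^ (4*h - j) * X 1 ^ j : MvPolynomial (Fin 2) ℤ) := by
  rw [schur2]
  apply Finset.sum_nbij' (i := fun i => b + i) (j := fun j => j - b)
  · intro a ha; simp only [mem_range] at ha; simp only [mem_filter, mem_range]; omega
  · intro a ha; simp only [mem_filter, mem_range] at ha; simp only [mem_range]; omega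
  · intro a ha; omega
  · intro a ha; simp only [mem_filter, mem_range] at ha; omega
  · intro a ha
    simp only [mem_range] at ha
    congr 2
    omega

lemma rhs_expand (h : ℕ) :
    (∑ b ∈ range (2*h+1), (coeff4 h b : ℤ) • schur2 (4*h - b) b)
      = ∑ s ∈ range (4*h+1), ((Tset h (min s (4*h - s))).card : ℤ) •
          (X 0 ^ (4*h - s) * X 1 ^ s : MvPolynomial (Fin 2) ℤ) := by
  have step1 : ∀ b ∈ range (2*h+1), (coeff4 h b : ℤ) • schur2 (4*h - b) b
      = ∑ s ∈ range (4*h+1), (if b ≤ s ∧ s + b ≤ 4*h then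
          (coeff4 h b : ℤ) • (X 0 ^ (4*h - s) * X 1 ^ s : MvPolynomial (Fin 2) ℤ) else 0) := by
    intro b hb
    simp only [mem_range] at hb
    rw [schur2_expand h b (by omega), Finset.smul_sum, ← Finset.sum_filter]
  rw [Finset.sum_congr rfl step1, Finset.sum_comm]
  refine Finset.sum_congr rfl fun s hs => ?_
  simp only [mem_range] at hs
  rw [← Finset.sum_filter]
  have hfil : (range (2*h+1)).filter (fun b => b ≤ s ∧ s + b ≤ 4*h)
      = range (min s (4*h - s) + 1) := by
    ext b; simp only [mem_filter, mem_range]; omega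
  rw [hfil, ← sum_coeff4 h (min s (4*h - s))]
  rw [Nat.cast_sum, Finset.sum_smul]

end Pleth4

/-- For every h ≥ 1, the two-variable plethysm has Schur expansion
s₄[s_h](x,y) = Σ_{(λ₁,λ₂) ⊢ 4h} a^λ s_λ(x,y), where a^{(λ₁,λ₂)} is the number of
partitions μ of λ₂ of the form 4^{m₄} 2^{m₂} 1^{m₁} with m₁ + m₂ + m₄ ≤ h, m₂ even,
m₁ ≥ 2 m₄ and m₁ ≠ 2 m₄ + 1. -/
theorem plethysm_four_coeff (h : ℕ) (hh : 1 ≤ h) :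
    pleth2 4 h =
      ∑ b ∈ Finset.range (4 * h / 2 + 1),
        (coeff4 h b : ℤ) • schur2 (4 * h - b) b := by
  have h42 : 4 * h / 2 = 2 * h := by omega
  rw [h42, Pleth4.rhs_expand, Pleth4.pleth2_expand]
  refine Finset.sum_congr rfl fun s hs => ?_
  simp only [Finset.mem_range] at hs
  rw [Pleth4.main_count h s (by omega)]
end

section
/- For every h ≥ 5, the two-variable plethysm satisfies the recursion s_4[s_h](x,y) = (xy)^6 · s_4[s_{h−3}](x,y) + (xy)^4 · s_4[s_{h−2}](x,y) − (xy)^{10} · s_4[s_{h−5}](x,y) + s_{(4h)}(x,y) + Σ_{k=2}^{h} s_{(4h−k, k)}(x,y). -/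
namespace PlethAux
open MvPolynomial Finset

local notation "x" => (X 0 : MvPolynomial (Fin 2) ℤ)
local notation "y" => (X 1 : MvPolynomial (Fin 2) ℤ)

noncomputable def geom (u v : MvPolynomial (Fin 2) ℤ) (m : ℕ) : MvPolynomial (Fin 2) ℤ :=
  ∑ i ∈ Finset.range (m + 1), u ^ (m - i) * v ^ i

lemma geom_succ (u v : MvPolynomial (Fin 2) ℤ) (m : ℕ) :
    geom u v (m + 1) = u ^ (m + 1) + v * geom u v m := by
  unfold geom
  rw [Finset.sum_range_succ', Finset.mul_sum]
  simp only [Nat.succ_sub_succ, Nat.sub_zero, pow_zero, mul_one, pow_succ]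
  rw [add_comm]
  congr 1
  exact Finset.sum_congr rfl fun i _ => by ring

lemma geom_mul (u v : MvPolynomial (Fin 2) ℤ) (m : ℕ) :
    (u - v) * geom u v m = u ^ (m + 1) - v ^ (m + 1) := by
  induction m with
  | zero => simp [geom]
  | succ m ih =>
    rw [geom_succ]
    linear_combination v * ih

noncomputable def F2 (h : ℕ) : MvPolynomial (Fin 2) ℤ :=
  ∑ b ∈ Finset.range (h + 1), x ^ (2 * (h - b)) * y ^ b * geom x y b

noncomputable def F3 (h : ℕ) : MvPolynomial (Fin 2) ℤ :=
  ∑ c ∈ Finset.range (h + 1), x ^ (3 * (h - c)) * y ^ c * F2 c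

noncomputable def F4 (h : ℕ) : MvPolynomial (Fin 2) ℤ :=
  ∑ d ∈ Finset.range (h + 1), x ^ (4 * (h - d)) * y ^ d * F3 d

lemma F2_succ (h : ℕ) : F2 (h + 1) = x ^ 2 * F2 h + y ^ (h + 1) * geom x y (h + 1) := by
  unfold F2
  rw [Finset.sum_range_succ, Finset.mul_sum]
  simp only [Nat.sub_self, mul_zero, pow_zero, one_mul]
  congr 1
  refine Finset.sum_congr rfl fun b hb => ?_
  rw [Finset.mem_range] at hb
  rw [show 2 * (h + 1 - b) = 2 * (h - b) + 2 by omega, pow_add]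
  ring

lemma F3_succ (h : ℕ) : F3 (h + 1) = x ^ 3 * F3 h + y ^ (h + 1) * F2 (h + 1) := by
  unfold F3
  rw [Finset.sum_range_succ, Finset.mul_sum]
  simp only [Nat.sub_self, mul_zero, pow_zero, one_mul]
  congr 1
  refine Finset.sum_congr rfl fun b hb => ?_
  rw [Finset.mem_range] at hb
  rw [show 3 * (h + 1 - b) = 3 * (h - b) + 3 by omega, pow_add]
  ring

lemma F4_succ (h : ℕ) : F4 (h + 1) = x ^ 4 * F4 h + y ^ (h + 1) * F3 (h + 1) := by
  unfold F4
  rw [Finset.sum_range_succ, Finset.mul_sum]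
  simp only [Nat.sub_self, mul_zero, pow_zero, one_mul]
  congr 1
  refine Finset.sum_congr rfl fun b hb => ?_
  rw [Finset.mem_range] at hb
  rw [show 4 * (h + 1 - b) = 4 * (h - b) + 4 by omega, pow_add]
  ring

lemma E2 (h : ℕ) : (x - y) * ((x ^ 2 - y ^ 2) * F2 h)
    = (x ^ (h + 1) - y ^ (h + 1)) * (x ^ (h + 2) - y ^ (h + 2)) := by
  induction h with
  | zero => simp [F2, geom]
  | succ h ih =>
    rw [F2_succ]
    have gm := geom_mul x y (h + 1)
    linear_combination x ^ 2 * ih + y ^ (h + 1) * (x ^ 2 - y ^ 2) * gm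

lemma E3 (h : ℕ) : (x - y) * ((x ^ 2 - y ^ 2) * ((x ^ 3 - y ^ 3) * F3 h))
    = (x ^ (h + 1) - y ^ (h + 1)) * (x ^ (h + 2) - y ^ (h + 2)) * (x ^ (h + 3) - y ^ (h + 3)) := by
  induction h with
  | zero => simp [F3, F2, geom]; ring
  | succ h ih =>
    rw [F3_succ]
    have e2 := E2 (h + 1)
    linear_combination x ^ 3 * ih + y ^ (h + 1) * (x ^ 3 - y ^ 3) * e2

lemma E4 (h : ℕ) : (x - y) * ((x ^ 2 - y ^ 2) * ((x ^ 3 - y ^ 3) * ((x ^ 4 - y ^ 4) * F4 h)))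
    = (x ^ (h + 1) - y ^ (h + 1)) * (x ^ (h + 2) - y ^ (h + 2)) * (x ^ (h + 3) - y ^ (h + 3))
      * (x ^ (h + 4) - y ^ (h + 4)) := by
  induction h with
  | zero => simp [F4, F3, F2, geom]; ring
  | succ h ih =>
    rw [F4_succ]
    have e3 := E3 (h + 1)
    linear_combination x ^ 4 * ih + y ^ (h + 1) * (x ^ 4 - y ^ 4) * e3

lemma F4_nested (h : ℕ) : F4 h =
    ∑ d ∈ Finset.range (h + 1), ∑ c ∈ Finset.range (d + 1), ∑ b ∈ Finset.range (c + 1),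
      ∑ a ∈ Finset.range (b + 1),
        (x ^ (h - a) * y ^ a) * ((x ^ (h - b) * y ^ b) *
          ((x ^ (h - c) * y ^ c) * (x ^ (h - d) * y ^ d))) := by
  unfold F4 F3 F2 geom
  simp only [Finset.mul_sum]
  refine Finset.sum_congr rfl fun d hd => Finset.sum_congr rfl fun c hc =>
    Finset.sum_congr rfl fun b hb => Finset.sum_congr rfl fun a ha => ?_
  simp only [Finset.mem_range] at hd hc hb ha
  rw [show h - a = (b - a) + ((c - b) + ((d - c) + (h - d))) by omega,
    show h - b = (c - b) + ((d - c) + (h - d)) by omega,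
    show h - c = (d - c) + (h - d) by omega]
  ring

lemma pleth_eq_F4 (h : ℕ) : pleth2 4 h = F4 h := by
  rw [F4_nested h, Finset.sum_sigma', Finset.sum_sigma', Finset.sum_sigma']
  unfold pleth2
  refine Finset.sum_nbij'
    (i := fun f => ⟨⟨⟨(f 3 : ℕ), (f 2 : ℕ)⟩, (f 1 : ℕ)⟩, (f 0 : ℕ)⟩)
    (j := fun r => fun t => ⟨min (![r.2, r.1.2, r.1.1.2, r.1.1.1] t) h, by
      have := min_le_right (![r.2, r.1.2, r.1.1.2, r.1.1.1] t) h; omega⟩)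
    ?_ ?_ ?_ ?_ ?_
  · intro f hf
    simp only [Finset.mem_filter, Finset.mem_univ, true_and] at hf
    simp only [Finset.mem_sigma, Finset.mem_range]
    refine ⟨⟨⟨(f 3).isLt, ?_⟩, ?_⟩, ?_⟩
    · exact Nat.lt_succ_of_le (hf 2 3 (by decide))
    · exact Nat.lt_succ_of_le (hf 1 2 (by decide))
    · exact Nat.lt_succ_of_le (hf 0 1 (by decide))
  · intro r hr
    obtain ⟨⟨⟨d, c⟩, b⟩, a⟩ := r
    simp only [Finset.mem_sigma, Finset.mem_range] at hr
    simp only [Finset.mem_filter, Finset.mem_univ, true_and]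
    intro i j hij
    rw [Fin.le_def] at hij ⊢
    fin_cases i <;> fin_cases j <;> simp_all <;> omega
  · intro f hf
    funext t
    have ht := (f t).isLt
    fin_cases t <;> (ext; simp; omega)
  · intro r hr
    obtain ⟨⟨⟨d, c⟩, b⟩, a⟩ := r
    simp only [Finset.mem_sigma, Finset.mem_range] at hr
    simp only [Matrix.cons_val_zero, Matrix.cons_val_one, Matrix.head_cons]
    congr <;> simp <;> omega
  · intro f hf
    rw [Fin.prod_univ_four]
    ring

lemma schur2_eq (a b : ℕ) (hba : b ≤ a) :
    schur2 a b = x ^ b * y ^ b * geom x y (a - b) := by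
  unfold schur2 geom
  rw [Finset.mul_sum]
  refine Finset.sum_congr rfl fun i hi => ?_
  rw [Finset.mem_range] at hi
  rw [show a - i = b + (a - b - i) by omega, pow_add, pow_add]
  ring

lemma sumIcc (u v : MvPolynomial (Fin 2) ℤ) (m n N : ℕ) (hmn : m ≤ n) (hnN : n ≤ N) :
    ∑ k ∈ Finset.Icc m n, u ^ (N - k) * v ^ k = u ^ (N - n) * v ^ m * geom u v (n - m) := by
  unfold geom
  rw [Finset.mul_sum]
  refine Finset.sum_nbij' (i := fun k => k - m) (j := fun i => i + m) ?_ ?_ ?_ ?_ ?_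
  · intro k hk; rw [Finset.mem_Icc] at hk; rw [Finset.mem_range]; beta_reduce; omega
  · intro i hi; rw [Finset.mem_range] at hi; rw [Finset.mem_Icc]; beta_reduce; omega
  · intro k hk; rw [Finset.mem_Icc] at hk; beta_reduce; omega
  · intro i _; simp
  · intro k hk
    rw [Finset.mem_Icc] at hk
    obtain ⟨α, rfl⟩ : ∃ α, k = m + α := ⟨k - m, by omega⟩
    beta_reduce
    rw [Nat.add_sub_cancel_left, show N - (m + α) = (N - n) + (n - m - α) by omega,
      pow_add, pow_add]
    ring

lemma schurSum (h : ℕ) (h2 : 2 ≤ h) :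
    (x - y) * ∑ k ∈ Finset.Icc 2 h, schur2 (4 * h - k) k
      = x ^ (3 * h + 1) * y ^ 2 * geom x y (h - 2)
        - y ^ (3 * h + 1) * x ^ 2 * geom y x (h - 2) := by
  rw [Finset.mul_sum]
  have step : ∀ k ∈ Finset.Icc 2 h, (x - y) * schur2 (4 * h - k) k
      = x ^ (4 * h + 1 - k) * y ^ k - y ^ (4 * h + 1 - k) * x ^ k := by
    intro k hk
    rw [Finset.mem_Icc] at hk
    rw [schur2_eq (4 * h - k) k (by omega)]
    have gm := geom_mul x y (4 * h - k - k)
    rw [show 4 * h + 1 - k = k + (4 * h - k - k + 1) by omega, pow_add, pow_add]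
    linear_combination x ^ k * y ^ k * gm
  rw [Finset.sum_congr rfl step, Finset.sum_sub_distrib,
    sumIcc x y 2 h (4 * h + 1) h2 (by omega), sumIcc y x 2 h (4 * h + 1) h2 (by omega),
    show 4 * h + 1 - h = 3 * h + 1 by omega]

lemma M_ne : ((x - y) ^ 2 * ((x ^ 2 - y ^ 2) * ((x ^ 3 - y ^ 3) * (x ^ 4 - y ^ 4)))
    : MvPolynomial (Fin 2) ℤ) ≠ 0 := by
  intro hc
  have := congrArg (MvPolynomial.eval fun i : Fin 2 => if i = 0 then (2 : ℤ) else 1) hc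
  simp [map_sub, map_mul, map_pow] at this

end PlethAux

open MvPolynomial in
/-- For every h ≥ 5,
s₄[s_h](x,y) = (xy)⁶ s₄[s_{h−3}](x,y) + (xy)⁴ s₄[s_{h−2}](x,y)
  − (xy)¹⁰ s₄[s_{h−5}](x,y) + s_{(4h)}(x,y) + Σ_{k=2}^{h} s_{(4h−k,k)}(x,y). -/
theorem plethysm_four_recursion (h : ℕ) (hh : 5 ≤ h) :
    pleth2 4 h =
      (X 0 * X 1) ^ 6 * pleth2 4 (h - 3) + (X 0 * X 1) ^ 4 * pleth2 4 (h - 2)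
        - (X 0 * X 1) ^ 10 * pleth2 4 (h - 5)
        + schur2 (4 * h) 0 + ∑ k ∈ Finset.Icc 2 h, schur2 (4 * h - k) k := by
  obtain ⟨m, rfl⟩ : ∃ m, h = m + 5 := ⟨h - 5, by omega⟩
  rw [show m + 5 - 3 = m + 2 by omega, show m + 5 - 2 = m + 3 by omega,
    show m + 5 - 5 = m by omega]
  set x : MvPolynomial (Fin 2) ℤ := X 0 with hx
  set y : MvPolynomial (Fin 2) ℤ := X 1 with hy
  refine mul_left_cancel₀
    (a := (x - y) ^ 2 * ((x ^ 2 - y ^ 2) * ((x ^ 3 - y ^ 3) * (x ^ 4 - y ^ 4)))) PlethAux.M_ne ?_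
  rw [PlethAux.pleth_eq_F4 (m + 5), PlethAux.pleth_eq_F4 (m + 2), PlethAux.pleth_eq_F4 (m + 3), PlethAux.pleth_eq_F4 m]
  have P5 := PlethAux.E4 (m + 5)
  have P2 := PlethAux.E4 (m + 2)
  have P3 := PlethAux.E4 (m + 3)
  have P0 := PlethAux.E4 m
  have S0 : (x - y) * schur2 (4 * (m + 5)) 0 = x ^ (4 * m + 21) - y ^ (4 * m + 21) := by
    rw [PlethAux.schur2_eq _ 0 (by omega), show 4 * (m + 5) - 0 = 4 * m + 20 by omega]
    have := PlethAux.geom_mul x y (4 * m + 20)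
    linear_combination this
  have SS := PlethAux.schurSum (m + 5) (by omega)
  rw [show m + 5 - 2 = m + 3 by omega] at SS
  have g1 := PlethAux.geom_mul x y (m + 3)
  have g2 := PlethAux.geom_mul y x (m + 3)
  linear_combination (x - y) * P5 - (x * y) ^ 6 * (x - y) * P2 - (x * y) ^ 4 * (x - y) * P3
    + (x * y) ^ 10 * (x - y) * P0
    - ((x - y) * ((x ^ 2 - y ^ 2) * ((x ^ 3 - y ^ 3) * (x ^ 4 - y ^ 4)))) * S0
    - ((x ^ 2 - y ^ 2) * ((x ^ 3 - y ^ 3) * (x ^ 4 - y ^ 4))) * ((x - y) * SS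
      + (x ^ (3 * (m + 5) + 1) * y ^ 2) * g1 + (y ^ (3 * (m + 5) + 1) * x ^ 2) * g2)
end
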